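/- For the random walk on the half-line, suppose in addition that 𝔼[r^{Z^+}] = ∞ for every r > 1. Then 𝔼_0[r^{τ_0}] = ∞ for every r > 1; that is, the return time of the chain to the atom 0 has no finite geometric moment. -/

import Mathlib

open MeasureTheory ProbabilityTheory ENNReal

/-- The random walk on the half-line `X_{n+1} = (X_n + Z_{n+1})⁺` started at `x`. -/
noncomputable def walk {Ω : Type*} (Z : ℕ → Ω → ℝ) (x : ℝ) : ℕ → Ω → ℝ
  | 0 => fun _ => x
  | n + 1 => fun ω => max (walk Z x n ω + Z (n + 1) ω) 0

/-- First return time of the walk to the atom `0`: `τ_0 = inf{n ≥ 1 : X_n = 0}`. -/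
noncomputable def hitZeroTime {Ω : Type*} (Z : ℕ → Ω → ℝ) (x : ℝ) (ω : Ω) : ℕ∞ :=
  ⨅ (n : ℕ) (_ : 1 ≤ n ∧ walk Z x n ω = 0), (n : ℕ∞)

/-- The geometric moment `r^t` for a possibly infinite time `t ∈ ℕ∞` (with `r^∞ = ∞`). -/
noncomputable def geomMoment (r : ℝ≥0∞) (t : ℕ∞) : ℝ≥0∞ :=
  if t = ⊤ then ⊤ else r ^ t.toNat

lemma aux_geom_sum {R : ℝ≥0∞} (hR : 1 ≤ R) (m : ℕ) :
    ∑ k ∈ Finset.range m, R ^ k * (R - 1) ≤ R ^ m := by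
  induction m with
  | zero => simp
  | succ m ih =>
    rw [Finset.sum_range_succ]
    calc ∑ k ∈ Finset.range m, R ^ k * (R - 1) + R ^ m * (R - 1)
        ≤ R ^ m + R ^ m * (R - 1) := by gcongr
      _ = R ^ m * (1 + (R - 1)) := by rw [mul_add, mul_one]
      _ = R ^ m * R := by rw [add_tsub_cancel_of_le hR]
      _ = R ^ (m + 1) := by ring

lemma aux_walk_meas {Ω : Type*} [MeasurableSpace Ω] {Z : ℕ → Ω → ℝ}
    (hZ : ∀ n, Measurable (Z n)) (x : ℝ) : ∀ n, Measurable (walk Z x n) := by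
  intro n
  induction n with
  | zero => exact measurable_const
  | succ n ih => exact (ih.add (hZ (n + 1))).max measurable_const

lemma aux_hit_spec {Ω : Type*} {Z : ℕ → Ω → ℝ} {ω : Ω}
    (h : hitZeroTime Z 0 ω ≠ ⊤) :
    1 ≤ (hitZeroTime Z 0 ω).toNat ∧ walk Z 0 ((hitZeroTime Z 0 ω).toNat) ω = 0 := by
  by_cases hS : ∃ n, 1 ≤ n ∧ walk Z 0 n ω = 0
  · have heq : hitZeroTime Z 0 ω = (Nat.find hS : ℕ∞) := by
      refine le_antisymm (iInf_le_of_le (Nat.find hS) (iInf_le_of_le (Nat.find_spec hS) le_rfl)) ?_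
      refine le_iInf fun n => le_iInf fun hn => ?_
      exact_mod_cast Nat.find_min' hS hn
    rw [heq]
    simpa using Nat.find_spec hS
  · exfalso
    apply h
    rw [hitZeroTime, iInf_eq_top]
    intro n
    rw [iInf_eq_top]
    exact fun hn => absurd ⟨hn.1, hn.2⟩ (not_exists.1 hS n)

lemma aux_hit_gt {Ω : Type*} {Z : ℕ → Ω → ℝ} {ω : Ω} {k : ℕ}
    (h : ∀ n, 1 ≤ n → n ≤ k → walk Z 0 n ω ≠ 0) :
    (k : ℕ∞) < hitZeroTime Z 0 ω := by
  have : ((k + 1 : ℕ) : ℕ∞) ≤ hitZeroTime Z 0 ω := by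
    refine le_iInf fun n => le_iInf fun hn => ?_
    have : ¬ n ≤ k := fun hle => h n hn.1 hle hn.2
    exact_mod_cast by omega
  refine lt_of_lt_of_le ?_ this
  exact_mod_cast Nat.lt_succ_self k

lemma aux_pt2 {Ω : Type*} {Z : ℕ → Ω → ℝ} {R : ℝ≥0∞} (hR : 1 ≤ R) (ω : Ω) :
    ∑' k : ℕ, Set.indicator {ω' | ∀ n, 1 ≤ n → n ≤ k → walk Z 0 n ω' ≠ 0}
      (fun _ => R ^ k * (R - 1)) ω ≤ geomMoment R (hitZeroTime Z 0 ω) := by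
  by_cases ht : hitZeroTime Z 0 ω = ⊤
  · simp [geomMoment, ht]
  · set m := (hitZeroTime Z 0 ω).toNat with hm
    obtain ⟨hm1, hmw⟩ := aux_hit_spec ht
    have hzero : ∀ k, k ∉ Finset.range m →
        Set.indicator {ω' | ∀ n, 1 ≤ n → n ≤ k → walk Z 0 n ω' ≠ 0}
          (fun _ => R ^ k * (R - 1)) ω = 0 := by
      intro k hk
      rw [Finset.mem_range, not_lt] at hk
      apply Set.indicator_of_notMem
      intro hmem
      exact hmem m hm1 hk hmw
    rw [tsum_eq_sum hzero]
    have : geomMoment R (hitZeroTime Z 0 ω) = R ^ m := by rw [geomMoment, if_neg ht]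
    rw [this]
    refine le_trans (Finset.sum_le_sum fun k _ => ?_) (aux_geom_sum hR m)
    exact Set.indicator_le_self _ _ ω

lemma aux_pt1 {Ω : Type*} {Z0 : Ω → ℝ} {ρ μm : ℝ} (hρ : 1 < ρ) (hμm : 0 < μm)
    (M : ℕ) (ω : Ω) :
    ENNReal.ofReal (ρ ^ max (Z0 ω) 0) ≤ ENNReal.ofReal (ρ ^ (M : ℝ)) +
      ∑' k : ℕ, Set.indicator {ω' | 2 * μm * k + M < Z0 ω'}
        (fun _ => ENNReal.ofReal (ρ ^ ((M : ℝ) + 2 * μm)) *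
          (ENNReal.ofReal (ρ ^ (2 * μm))) ^ k) ω := by
  have hρ0 : (0 : ℝ) < ρ := lt_trans one_pos hρ
  set x := max (Z0 ω) 0 with hx
  have hx0 : 0 ≤ x := le_max_right _ _
  by_cases hxM : x ≤ (M : ℝ)
  · refine le_trans ?_ le_self_add
    exact ENNReal.ofReal_le_ofReal ((Real.rpow_le_rpow_left_iff hρ).2 hxM)
  · push_neg at hxM
    have hMx : (0 : ℝ) < x := lt_of_le_of_lt (Nat.cast_nonneg M) hxM
    set d := (x - M) / (2 * μm) with hdd
    have hd : 0 < d := div_pos (by linarith) (by linarith)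
    have hd2 : x = 2 * μm * d + M := by
      rw [hdd]; field_simp; ring
    have hceil : 1 ≤ ⌈d⌉₊ := Nat.one_le_ceil_iff.2 hd
    set k0 := ⌈d⌉₊ - 1 with hk0
    have hk0c : (k0 : ℝ) = (⌈d⌉₊ : ℝ) - 1 := by
      rw [hk0, Nat.cast_sub hceil]; norm_num
    have hk0lt : (k0 : ℝ) < d := by
      have := Nat.ceil_lt_add_one hd.le
      rw [hk0c]; linarith
    have hk0ge : d ≤ (k0 : ℝ) + 1 := by
      have := Nat.le_ceil d
      rw [hk0c]; linarith
    have ha : 2 * μm * (k0 : ℝ) + M < x := by nlinarith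
    have hb : x ≤ 2 * μm * ((k0 : ℝ) + 1) + M := by nlinarith
    have hZx : Z0 ω = x := by
      rcases le_or_gt (Z0 ω) 0 with h | h
      · exfalso
        have : x = 0 := by rw [hx, max_eq_right h]
        rw [this] at hMx; exact lt_irrefl _ hMx
      · rw [hx, max_eq_left h.le]
    have hmem : ω ∈ {ω' | 2 * μm * (k0 : ℝ) + M < Z0 ω'} := by
      simp only [Set.mem_setOf_eq, hZx]; exact ha
    have hval : ρ ^ (2 * μm * ((k0 : ℝ) + 1) + M) =
        ρ ^ ((M : ℝ) + 2 * μm) * (ρ ^ (2 * μm)) ^ k0 := by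
      rw [← Real.rpow_natCast (ρ ^ (2 * μm)) k0, ← Real.rpow_mul hρ0.le,
        ← Real.rpow_add hρ0]
      ring_nf
    calc ENNReal.ofReal (ρ ^ x)
        ≤ ENNReal.ofReal (ρ ^ (2 * μm * ((k0 : ℝ) + 1) + M)) :=
          ENNReal.ofReal_le_ofReal ((Real.rpow_le_rpow_left_iff hρ).2 hb)
      _ = ENNReal.ofReal (ρ ^ ((M : ℝ) + 2 * μm)) *
            (ENNReal.ofReal (ρ ^ (2 * μm))) ^ k0 := by
          rw [hval, ENNReal.ofReal_mul (Real.rpow_nonneg hρ0.le _),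
            ENNReal.ofReal_pow (Real.rpow_nonneg hρ0.le _)]
      _ = Set.indicator {ω' | 2 * μm * (k0 : ℝ) + M < Z0 ω'}
            (fun _ => ENNReal.ofReal (ρ ^ ((M : ℝ) + 2 * μm)) *
              (ENNReal.ofReal (ρ ^ (2 * μm))) ^ k0) ω := by
          rw [Set.indicator_of_mem hmem]
      _ ≤ ∑' k : ℕ, Set.indicator {ω' | 2 * μm * k + M < Z0 ω'}
            (fun _ => ENNReal.ofReal (ρ ^ ((M : ℝ) + 2 * μm)) *
              (ENNReal.ofReal (ρ ^ (2 * μm))) ^ k) ω := ENNReal.le_tsum k0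
      _ ≤ _ := le_add_self

lemma aux_walk_pos {Ω : Type*} {Z : ℕ → Ω → ℝ} {μm : ℝ} (hμm : 0 < μm) (M k : ℕ) (ω : Ω)
    (hZ1 : 2 * μm * k + M < Z 1 ω)
    (hT : ∀ j, j < k → -(2 * μm * j + M) ≤ ∑ i ∈ Finset.range j, Z (i + 2) ω) :
    ∀ n, 1 ≤ n → n ≤ k → walk Z 0 n ω ≠ 0 := by
  have hZ1pos : 0 < Z 1 ω := by
    have : (0 : ℝ) ≤ 2 * μm * k + M := by positivity
    linarith
  have key : ∀ n, n + 1 ≤ k →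
      0 < walk Z 0 (n + 1) ω ∧
        walk Z 0 (n + 1) ω = Z 1 ω + ∑ i ∈ Finset.range n, Z (i + 2) ω := by
    intro n
    induction n with
    | zero =>
      intro _
      have h0 : walk Z 0 0 ω = 0 := rfl
      have h1 : walk Z 0 1 ω = max (walk Z 0 0 ω + Z 1 ω) 0 := rfl
      rw [h1, h0, zero_add, max_eq_left hZ1pos.le]
      simp [hZ1pos]
    | succ n ih =>
      intro hk
      obtain ⟨hpos, hform⟩ := ih (by omega)
      have hstep : walk Z 0 (n + 2) ω = max (walk Z 0 (n + 1) ω + Z (n + 2) ω) 0 := rfl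
      have hsum : walk Z 0 (n + 1) ω + Z (n + 2) ω =
          Z 1 ω + ∑ i ∈ Finset.range (n + 1), Z (i + 2) ω := by
        rw [hform, Finset.sum_range_succ]; ring
      have hTn := hT (n + 1) (by omega)
      have hcast : ((n + 1 : ℕ) : ℝ) ≤ (k : ℝ) := by exact_mod_cast by omega
      have hposval : 0 < Z 1 ω + ∑ i ∈ Finset.range (n + 1), Z (i + 2) ω := by
        push_cast at hTn hcast ⊢
        nlinarith
      constructor
      · rw [hstep, hsum, max_eq_left hposval.le]; exact hposval
      · rw [hstep, hsum, max_eq_left hposval.le]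
  intro n h1 h2
  obtain ⟨m, rfl⟩ : ∃ m, n = m + 1 := ⟨n - 1, by omega⟩
  exact (key m h2).1.ne'

lemma aux_indep {Ω : Type*} [MeasurableSpace Ω] (Pr : Measure Ω) [IsProbabilityMeasure Pr]
    (Z : ℕ → Ω → ℝ) (hZmeas : ∀ n, Measurable (Z n))
    (hindep : ProbabilityTheory.iIndepFun Z Pr)
    (a c M : ℝ) (k : ℕ) :
    Pr ({ω | a < Z 1 ω} ∩ {ω | ∀ j, j < k → -(c * j + M) ≤ ∑ i ∈ Finset.range j, Z (i + 2) ω})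
      = Pr {ω | a < Z 1 ω} *
        Pr {ω | ∀ j, j < k → -(c * j + M) ≤ ∑ i ∈ Finset.range j, Z (i + 2) ω} := by
  classical
  set T : Finset ℕ := Finset.Icc 2 (k + 1) with hT
  have hdisj : Disjoint ({1} : Finset ℕ) T := by
    rw [Finset.disjoint_left]
    intro x hx
    simp only [Finset.mem_singleton] at hx
    subst hx
    simp [hT]
  have hIF := hindep.indepFun_finset {1} T hdisj hZmeas
  set F : (↥T → ℝ) → (ℕ → ℝ) :=
    fun v i => if h : i ∈ T then v ⟨i, h⟩ else 0 with hF
  have hFmeas : Measurable F := by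
    apply measurable_pi_lambda
    intro i
    by_cases h : i ∈ T
    · simp only [hF, h, dif_pos]
      exact measurable_pi_apply _
    · simp only [hF, h, dif_neg, not_false_iff]
      exact measurable_const
  set s1 : Set (({1} : Finset ℕ) → ℝ) :=
    (fun v => v ⟨1, by simp⟩) ⁻¹' Set.Ioi a with hs1def
  have hs1 : MeasurableSet s1 := (measurable_pi_apply _) measurableSet_Ioi
  set A : Set (ℕ → ℝ) :=
    {u | ∀ j, j < k → -(c * j + M) ≤ ∑ i ∈ Finset.range j, u (i + 2)} with hAdef
  have hA : MeasurableSet A := by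
    have : A = ⋂ j, ⋂ (_ : j < k),
        {u : ℕ → ℝ | -(c * j + M) ≤ ∑ i ∈ Finset.range j, u (i + 2)} := by
      ext u; simp [hAdef, Set.mem_iInter]
    rw [this]
    exact MeasurableSet.iInter fun j => MeasurableSet.iInter fun _ =>
      measurableSet_le measurable_const (Finset.measurable_sum _ fun i _ => measurable_pi_apply (i + 2))
  set s2 := F ⁻¹' A with hs2def
  have hs2 : MeasurableSet s2 := hFmeas hA
  have hpre1 : (fun ω (i : ({1} : Finset ℕ)) => Z i ω) ⁻¹' s1 = {ω | a < Z 1 ω} := rfl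
  have hpre2 : (fun ω (i : ↥T) => Z i ω) ⁻¹' s2 =
      {ω | ∀ j, j < k → -(c * j + M) ≤ ∑ i ∈ Finset.range j, Z (i + 2) ω} := by
    ext ω
    simp only [Set.mem_preimage, hs2def, hAdef, Set.mem_setOf_eq, hF]
    refine forall_congr' fun j => imp_congr_right fun hj => ?_
    have hsum : ∑ i ∈ Finset.range j,
        (if h : i + 2 ∈ T then Z (i + 2) ω else 0) = ∑ i ∈ Finset.range j, Z (i + 2) ω := by
      refine Finset.sum_congr rfl fun i hi => ?_
      rw [Finset.mem_range] at hi
      rw [dif_pos (by simp only [hT, Finset.mem_Icc]; omega)]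
    rw [hsum]
  have := hIF.measure_inter_preimage_eq_mul s1 s2 hs1 hs2
  rwa [hpre1, hpre2] at this

open Filter in
lemma aux_slln {Ω : Type*} [MeasurableSpace Ω] (Pr : Measure Ω) [IsProbabilityMeasure Pr]
    (Z : ℕ → Ω → ℝ) (hZmeas : ∀ n, Measurable (Z n))
    (hindep : ProbabilityTheory.iIndepFun Z Pr)
    (hident : ∀ n, ProbabilityTheory.IdentDistrib (Z n) (Z 0) Pr Pr)
    (hint : Integrable (Z 0) Pr)
    (μm : ℝ) (hmean : ∫ ω, Z 0 ω ∂Pr = -μm) (hμm : 0 < μm) :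
    ∃ M : ℕ, Pr {ω | ∀ j : ℕ,
      -(2 * μm * j + M) ≤ ∑ i ∈ Finset.range j, Z (i + 2) ω} ≠ 0 := by
  set Y : ℕ → Ω → ℝ := fun i => Z (i + 2) with hY
  have hYint : Integrable (Y 0) Pr := ((hident 2).integrable_iff).2 hint
  have hYindep : Pairwise (Function.onFun (IndepFun · · Pr) Y) := by
    intro i j hij
    exact hindep.indepFun (show i + 2 ≠ j + 2 by omega)
  have hYident : ∀ i, IdentDistrib (Y i) (Y 0) Pr Pr :=
    fun i => (hident (i + 2)).trans (hident 2).symm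
  have hmean' : ∫ ω, Y 0 ω ∂Pr = -μm := by
    rw [hY]; simpa using ((hident 2).integral_eq).trans hmean
  have hae := strong_law_ae Y hYint hYindep hYident
  rw [hmean'] at hae
  -- a.e. ω belongs to some B M
  have hae2 : ∀ᵐ ω ∂Pr, ∃ M : ℕ, ∀ j : ℕ,
      -(2 * μm * j + M) ≤ ∑ i ∈ Finset.range j, Z (i + 2) ω := by
    filter_upwards [hae] with ω htend
    have hev : ∀ᶠ n : ℕ in atTop,
        -(2 * μm) < (n : ℝ)⁻¹ • ∑ i ∈ Finset.range n, Y i ω :=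
      htend.eventually (eventually_gt_nhds (by linarith))
    obtain ⟨N, hN⟩ := eventually_atTop.1 hev
    set M : ℕ := ⌈∑ j ∈ Finset.range (N + 1), |∑ i ∈ Finset.range j, Z (i + 2) ω|⌉₊ with hM
    refine ⟨M, fun j => ?_⟩
    have hMle : ∑ j' ∈ Finset.range (N + 1), |∑ i ∈ Finset.range j', Z (i + 2) ω| ≤ (M : ℝ) :=
      Nat.le_ceil _
    by_cases hj : j ≤ N
    · have habs : |∑ i ∈ Finset.range j, Z (i + 2) ω| ≤
          ∑ j' ∈ Finset.range (N + 1), |∑ i ∈ Finset.range j', Z (i + 2) ω| :=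
        Finset.single_le_sum (f := fun j' => |∑ i ∈ Finset.range j', Z (i + 2) ω|)
          (fun j' _ => abs_nonneg _) (Finset.mem_range.2 (by omega))
      have h1 : -(M : ℝ) ≤ ∑ i ∈ Finset.range j, Z (i + 2) ω := by
        have := neg_abs_le (∑ i ∈ Finset.range j, Z (i + 2) ω)
        linarith
      have h2 : (0 : ℝ) ≤ 2 * μm * j := by positivity
      linarith
    · push_neg at hj
      have hjpos : 0 < j := by omega
      have := hN j (by omega)
      rw [smul_eq_mul] at this
      have hjR : (0 : ℝ) < (j : ℝ) := by exact_mod_cast hjpos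
      have : -(2 * μm) * j < ∑ i ∈ Finset.range j, Y i ω := by
        have h2 := mul_lt_mul_of_pos_left this hjR
        rw [← mul_assoc, mul_inv_cancel₀ hjR.ne', one_mul] at h2
        linarith
      have hMn : (0 : ℝ) ≤ (M : ℝ) := Nat.cast_nonneg _
      simp only [hY] at this
      linarith
  -- now extract M with positive probability
  set B : ℕ → Set Ω := fun M =>
    {ω | ∀ j : ℕ, -(2 * μm * j + M) ≤ ∑ i ∈ Finset.range j, Z (i + 2) ω} with hB
  have hBmeas : ∀ M, MeasurableSet (B M) := by
    intro M
    have : B M = ⋂ j, {ω | -(2 * μm * j + M) ≤ ∑ i ∈ Finset.range j, Z (i + 2) ω} := by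
      ext ω; simp [hB, Set.mem_iInter]
    rw [this]
    exact MeasurableSet.iInter fun j =>
      measurableSet_le measurable_const (Finset.measurable_sum _ fun i _ => hZmeas (i + 2))
  by_contra hcon
  push_neg at hcon
  have hnull : Pr (⋃ M, B M) = 0 := measure_iUnion_null hcon
  have hone : Pr (⋃ M, B M) = 1 := by
    rw [← prob_compl_eq_zero_iff (MeasurableSet.iUnion hBmeas)]
    have : ∀ᵐ ω ∂Pr, ω ∈ ⋃ M, B M := by
      filter_upwards [hae2] with ω ⟨M, hM⟩
      exact Set.mem_iUnion.2 ⟨M, hM⟩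
    exact ae_iff.1 this
  rw [hnull] at hone
  exact zero_ne_one hone

/-- for the random walk on the half-line driven by i.i.d. increments `Z`
with `𝔼[Z] < 0`, if `𝔼[r^{Z⁺}] = ∞` for every `r > 1`, then `𝔼_0[r^{τ_0}] = ∞` for
every `r > 1`: the return time to the atom `0` has no finite geometric moment. -/
theorem stmt_16 {Ω : Type*} [MeasurableSpace Ω]
    (Pr : Measure Ω) [IsProbabilityMeasure Pr]
    (Z : ℕ → Ω → ℝ) (hZmeas : ∀ n, Measurable (Z n))
    (hindep : ProbabilityTheory.iIndepFun Z Pr)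
    (hident : ∀ n, ProbabilityTheory.IdentDistrib (Z n) (Z 0) Pr Pr)
    (hint : Integrable (Z 0) Pr)
    (μm : ℝ) (hmean : ∫ ω, Z 0 ω ∂Pr = -μm) (hμm : 0 < μm)
    (hheavy : ∀ r : ℝ, 1 < r →
      ∫⁻ ω, ENNReal.ofReal (r ^ (max (Z 0 ω) 0)) ∂Pr = ⊤) :
    ∀ r : ℝ, 1 < r →
      ∫⁻ ω, geomMoment (ENNReal.ofReal r) (hitZeroTime Z 0 ω) ∂Pr = ⊤ := by
  intro r hr
  have hr0 : (0 : ℝ) < r := lt_trans one_pos hr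
  set R : ℝ≥0∞ := ENNReal.ofReal r with hRdef
  have hR1 : 1 < R := by rwa [hRdef, ENNReal.one_lt_ofReal]
  -- choose M from the SLLN
  obtain ⟨M, hq⟩ := aux_slln Pr Z hZmeas hindep hident hint μm hmean hμm
  set B : Set Ω := {ω | ∀ j : ℕ,
    -(2 * μm * j + M) ≤ ∑ i ∈ Finset.range j, Z (i + 2) ω} with hBdef
  -- ρ with ρ^(2μm) = r
  set ρ : ℝ := r ^ (2 * μm)⁻¹ with hρdef
  have h2μ : (0 : ℝ) < 2 * μm := by linarith
  have hρ1 : 1 < ρ := by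
    rw [hρdef]
    exact (Real.one_lt_rpow_iff_of_pos hr0).2 (Or.inl ⟨hr, by positivity⟩)
  have hρr : ρ ^ (2 * μm) = r := by
    rw [hρdef, ← Real.rpow_mul hr0.le, inv_mul_cancel₀ h2μ.ne', Real.rpow_one]
  -- the tail sets
  set s : ℕ → Set Ω := fun k => {ω | 2 * μm * k + M < Z 0 ω} with hsdef
  have hsmeas : ∀ k, MeasurableSet (s k) :=
    fun k => measurableSet_lt measurable_const (hZmeas 0)
  set C : ℝ≥0∞ := ENNReal.ofReal (ρ ^ ((M : ℝ) + 2 * μm)) with hCdef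
  -- heavy tail sum
  have hsum : ∑' k : ℕ, R ^ k * Pr (s k) = ⊤ := by
    have hH := hheavy ρ hρ1
    have hle := lintegral_mono (μ := Pr) (fun ω => aux_pt1 (Z0 := Z 0) hρ1 hμm M ω)
    rw [hH] at hle
    have hmeasind : ∀ k : ℕ, AEMeasurable
        (Set.indicator (s k) (fun _ => C * (ENNReal.ofReal (ρ ^ (2 * μm))) ^ k)) Pr :=
      fun k => (measurable_const.indicator (hsmeas k)).aemeasurable
    rw [lintegral_add_left measurable_const, lintegral_const, measure_univ, mul_one,
      lintegral_tsum hmeasind] at hle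
    have hcalc : ∀ k : ℕ, ∫⁻ ω, Set.indicator (s k)
        (fun _ => C * (ENNReal.ofReal (ρ ^ (2 * μm))) ^ k) ω ∂Pr
        = C * R ^ k * Pr (s k) := by
      intro k
      rw [lintegral_indicator_const (hsmeas k), hρr, ← hRdef]
    simp only [hcalc] at hle
    have htop : ∑' k : ℕ, C * R ^ k * Pr (s k) = ⊤ := by
      by_contra h
      exact (ENNReal.add_ne_top.2 ⟨ENNReal.ofReal_ne_top, h⟩) (top_le_iff.1 hle)
    have : C * ∑' k : ℕ, R ^ k * Pr (s k) = ⊤ := by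
      rw [← ENNReal.tsum_mul_left]
      simpa only [mul_assoc] using htop
    have hCne : C ≠ ⊤ := by rw [hCdef]; exact ENNReal.ofReal_ne_top
    by_contra h
    exact (ENNReal.mul_ne_top hCne h) this
  -- identify tail of Z 1 with tail of Z 0
  have hP1 : ∀ a : ℝ, Pr {ω | a < Z 1 ω} = Pr {ω | a < Z 0 ω} := by
    intro a
    have h1 : {ω | a < Z 1 ω} = Z 1 ⁻¹' Set.Ioi a := rfl
    have h0 : {ω | a < Z 0 ω} = Z 0 ⁻¹' Set.Ioi a := rfl
    rw [h1, h0, ← Measure.map_apply (hZmeas 1) measurableSet_Ioi,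
      ← Measure.map_apply (hZmeas 0) measurableSet_Ioi, (hident 1).map_eq]
  -- events that the walk stays away from 0
  set G : ℕ → Set Ω := fun k => {ω' | ∀ n, 1 ≤ n → n ≤ k → walk Z 0 n ω' ≠ 0} with hGdef
  have hGmeas : ∀ k, MeasurableSet (G k) := by
    intro k
    have : G k = ⋂ n, ⋂ (_ : 1 ≤ n), ⋂ (_ : n ≤ k), {ω' | walk Z 0 n ω' ≠ 0} := by
      ext ω; simp [hGdef, Set.mem_iInter]
    rw [this]
    exact MeasurableSet.iInter fun n => MeasurableSet.iInter fun _ =>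
      MeasurableSet.iInter fun _ =>
        ((aux_walk_meas hZmeas 0 n) (measurableSet_singleton 0)).compl
  -- lower bound on Pr (G k)
  have hGP : ∀ k : ℕ, Pr (s k) * Pr B ≤ Pr (G k) := by
    intro k
    set Bf : Set Ω := {ω | ∀ j, j < k →
      -(2 * μm * j + (M : ℝ)) ≤ ∑ i ∈ Finset.range j, Z (i + 2) ω} with hBfdef
    have hsub : {ω | (2 * μm * k + M : ℝ) < Z 1 ω} ∩ Bf ⊆ G k := by
      rintro ω ⟨h1, h2⟩
      exact aux_walk_pos hμm M k ω h1 h2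
    have hBsub : B ⊆ Bf := fun ω hω j _ => hω j
    calc Pr (s k) * Pr B = Pr {ω | (2 * μm * k + M : ℝ) < Z 1 ω} * Pr B := by
          rw [hP1]
      _ ≤ Pr {ω | (2 * μm * k + M : ℝ) < Z 1 ω} * Pr Bf :=
          mul_le_mul_right (measure_mono hBsub) _
      _ = Pr ({ω | (2 * μm * k + M : ℝ) < Z 1 ω} ∩ Bf) :=
          (aux_indep Pr Z hZmeas hindep (2 * μm * k + M) (2 * μm) (M : ℝ) k).symm
      _ ≤ Pr (G k) := measure_mono hsub
  -- main lower bound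
  have hmain : ∑' k : ℕ, R ^ k * (R - 1) * Pr (G k) ≤
      ∫⁻ ω, geomMoment R (hitZeroTime Z 0 ω) ∂Pr := by
    have hle := lintegral_mono (μ := Pr) (fun ω => aux_pt2 (Z := Z) hR1.le ω)
    rw [lintegral_tsum (fun k => (measurable_const.indicator (hGmeas k)).aemeasurable)] at hle
    have hcalc : ∀ k : ℕ, ∫⁻ ω, Set.indicator (G k) (fun _ => R ^ k * (R - 1)) ω ∂Pr
        = R ^ k * (R - 1) * Pr (G k) := fun k => lintegral_indicator_const (hGmeas k) _
    simpa only [hcalc] using hle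
  -- conclude
  have hfinal : (⊤ : ℝ≥0∞) ≤ ∑' k : ℕ, R ^ k * (R - 1) * Pr (G k) := by
    have hstep : ∀ k : ℕ, ((R - 1) * Pr B) * (R ^ k * Pr (s k)) ≤
        R ^ k * (R - 1) * Pr (G k) := by
      intro k
      calc ((R - 1) * Pr B) * (R ^ k * Pr (s k))
          = (R ^ k * (R - 1)) * (Pr (s k) * Pr B) := by ring
        _ ≤ (R ^ k * (R - 1)) * Pr (G k) := mul_le_mul_right (hGP k) _
        _ = R ^ k * (R - 1) * Pr (G k) := rfl
    have h1 : ((R - 1) * Pr B) * ∑' k : ℕ, R ^ k * Pr (s k) ≤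
        ∑' k : ℕ, R ^ k * (R - 1) * Pr (G k) := by
      rw [← ENNReal.tsum_mul_left]
      exact ENNReal.tsum_le_tsum hstep
    have hne : (R - 1) * Pr B ≠ 0 := by
      apply mul_ne_zero
      · exact (tsub_pos_iff_lt.2 hR1).ne'
      · exact hq
    rw [hsum, ENNReal.mul_top hne] at h1
    exact h1
  exact top_le_iff.1 (le_trans hfinal hmain)
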